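/- Let ρ ∈ (0,1), δ_max > 0, τ ∈ ℕ with 1 ≤ τ, and T₂ > T₁ + τ. Define the triangular shock δ_t = δ_max (t − T₁)/τ for T₁ ≤ t ≤ T₁+τ, δ_t = δ_max (T₂ − t)/(T₂ − T₁ − τ) for T₁+τ < t ≤ T₂, and δ_t = 0 otherwise. Then for every interior ramp-up date t ∈ {T₁+1, …, T₁+τ−1}, the second difference of T_t = Σ_{j≥0} ρ^j δ_{t+1+j} satisfies Δ²T_t = δ_max ρ^{T₁+τ−t} [ −1/τ + (ρ^{T₂−T₁−τ} − 1)/(T₂ − T₁ − τ) ] < 0. -/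

import Mathlib

/-- The triangular technology profile violates convexity of the present-value term
on interior ramp-up dates: the second difference is the given negative closed form. -/
theorem stmt10 (ρ δmax : ℝ) (hρ0 : 0 < ρ) (hρ1 : ρ < 1) (hδmax : 0 < δmax)
    (τ : ℕ) (hτ : 1 ≤ τ) (T₁ T₂ : ℤ) (hT₂ : T₁ + (τ : ℤ) < T₂)
    (δ : ℤ → ℝ)
    (hδ : ∀ s : ℤ, δ s =
      if T₁ ≤ s ∧ s ≤ T₁ + (τ : ℤ) then δmax * ((s : ℝ) - (T₁ : ℝ)) / (τ : ℝ)
      else if T₁ + (τ : ℤ) < s ∧ s ≤ T₂ then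
        δmax * ((T₂ : ℝ) - (s : ℝ)) / ((T₂ : ℝ) - (T₁ : ℝ) - (τ : ℝ))
      else 0)
    (T : ℤ → ℝ) (hT : ∀ t : ℤ, T t = ∑' j : ℕ, ρ ^ j * δ (t + 1 + (j : ℤ))) :
    ∀ t : ℤ, T₁ + 1 ≤ t → t ≤ T₁ + (τ : ℤ) - 1 →
      (T t - 2 * T (t - 1) + T (t - 2) =
        δmax * ρ ^ (T₁ + (τ : ℤ) - t).toNat *
          (-(1 / (τ : ℝ)) +
            (ρ ^ (T₂ - T₁ - (τ : ℤ)).toNat - 1) / ((T₂ : ℝ) - (T₁ : ℝ) - (τ : ℝ)))) ∧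
      T t - 2 * T (t - 1) + T (t - 2) < 0 := by
  intro t ht1 ht2
  have hτZ : (1 : ℤ) ≤ (τ : ℤ) := by exact_mod_cast hτ
  have hτR : (0 : ℝ) < (τ : ℝ) := by exact_mod_cast lt_of_lt_of_le one_pos hτ
  have hτR' : (τ : ℝ) ≠ 0 := ne_of_gt hτR
  have hDR : (0 : ℝ) < (T₂ : ℝ) - (T₁ : ℝ) - (τ : ℝ) := by
    have : (T₁ : ℝ) + (τ : ℝ) < (T₂ : ℝ) := by exact_mod_cast hT₂
    linarith
  have hDR' : (T₂ : ℝ) - (T₁ : ℝ) - (τ : ℝ) ≠ 0 := ne_of_gt hDR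
  -- clean piecewise formulas
  have hA : ∀ s : ℤ, T₁ ≤ s → s ≤ T₁ + (τ : ℤ) →
      δ s = δmax * ((s : ℝ) - (T₁ : ℝ)) / (τ : ℝ) := by
    intro s h1 h2
    rw [hδ s, if_pos ⟨h1, h2⟩]
  have hB : ∀ s : ℤ, T₁ + (τ : ℤ) ≤ s → s ≤ T₂ →
      δ s = δmax * ((T₂ : ℝ) - (s : ℝ)) / ((T₂ : ℝ) - (T₁ : ℝ) - (τ : ℝ)) := by
    intro s h1 h2
    rw [hδ s]
    by_cases h : T₁ ≤ s ∧ s ≤ T₁ + (τ : ℤ)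
    · rw [if_pos h]
      have hs : s = T₁ + (τ : ℤ) := le_antisymm h.2 h1
      have hsr : (s : ℝ) = (T₁ : ℝ) + (τ : ℝ) := by exact_mod_cast congrArg (Int.cast : ℤ → ℝ) hs
      rw [hsr, show (T₂:ℝ) - ((T₁:ℝ) + (τ:ℝ)) = (T₂:ℝ) - (T₁:ℝ) - (τ:ℝ) from by ring,
        show (T₁:ℝ) + (τ:ℝ) - (T₁:ℝ) = (τ:ℝ) from by ring, mul_div_assoc, mul_div_assoc,
        div_self hτR', div_self hDR']
    · rw [if_neg h, if_pos ⟨by omega, h2⟩]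
  have hC : ∀ s : ℤ, T₂ < s → δ s = 0 := by
    intro s h1
    rw [hδ s, if_neg (by omega), if_neg (by omega)]
  -- the kernel: second differences of δ vanish off the kinks
  have hker : ∀ s : ℤ, T₁ + 1 ≤ s → s ≠ T₁ + (τ : ℤ) → s ≠ T₂ →
      δ (s + 1) - 2 * δ s + δ (s - 1) = 0 := by
    intro s hs h1 h2
    rcases (show s + 1 ≤ T₁ + (τ : ℤ) ∨ (T₁ + (τ : ℤ) + 1 ≤ s ∧ s + 1 ≤ T₂) ∨
        s = T₂ + 1 ∨ T₂ + 2 ≤ s by omega) with h | ⟨h, h'⟩ | h | h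
    · rw [hA (s + 1) (by omega) h, hA s (by omega) (by omega),
        hA (s - 1) (by omega) (by omega)]
      push_cast
      ring
    · rw [hB (s + 1) (by omega) h', hB s (by omega) (by omega),
        hB (s - 1) (by omega) (by omega)]
      push_cast
      ring
    · rw [hC (s + 1) (by omega), hC s (by omega), hB (s - 1) (by omega) (by omega)]
      have hsr : (s : ℝ) = (T₂ : ℝ) + 1 := by exact_mod_cast congrArg (Int.cast : ℤ → ℝ) h
      push_cast
      rw [hsr]
      ring
    · rw [hC (s + 1) (by omega), hC s (by omega), hC (s - 1) (by omega)]
      ring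
  -- values at the two kinks
  have hka : δ (T₁ + (τ : ℤ) + 1) - 2 * δ (T₁ + (τ : ℤ)) + δ (T₁ + (τ : ℤ) - 1) =
      δmax * (-(1 / (τ : ℝ)) - 1 / ((T₂ : ℝ) - (T₁ : ℝ) - (τ : ℝ))) := by
    rw [hB (T₁ + (τ : ℤ) + 1) (by omega) (by omega), hA (T₁ + (τ : ℤ)) (by omega) le_rfl,
      hA (T₁ + (τ : ℤ) - 1) (by omega) (by omega)]
    push_cast
    field_simp
    ring
  have hkb : δ (T₂ + 1) - 2 * δ T₂ + δ (T₂ - 1) =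
      δmax * (1 / ((T₂ : ℝ) - (T₁ : ℝ) - (τ : ℝ))) := by
    rw [hC (T₂ + 1) (by omega), hB T₂ (by omega) le_rfl, hB (T₂ - 1) (by omega) (by omega)]
    push_cast
    field_simp
    ring
  -- boundedness and summability
  have hbound : ∀ s : ℤ, |δ s| ≤ δmax := by
    intro s
    rw [hδ s]
    split_ifs with h1 h2
    · have hb1 : (T₁ : ℝ) ≤ (s : ℝ) := by exact_mod_cast h1.1
      have hb2 : (s : ℝ) ≤ (T₁ : ℝ) + (τ : ℝ) := by exact_mod_cast h1.2
      rw [abs_of_nonneg (div_nonneg (mul_nonneg hδmax.le (by linarith)) hτR.le)]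
      rw [div_le_iff₀ hτR]
      nlinarith
    · have hb1 : (T₁ : ℝ) + (τ : ℝ) ≤ (s : ℝ) := by
        have : T₁ + (τ : ℤ) ≤ s := le_of_lt h2.1
        exact_mod_cast this
      have hb2 : (s : ℝ) ≤ (T₂ : ℝ) := by exact_mod_cast h2.2
      rw [abs_of_nonneg (div_nonneg (mul_nonneg hδmax.le (by linarith)) hDR.le)]
      rw [div_le_iff₀ hDR]
      nlinarith
    · simpa using le_of_lt hδmax
  have hsumm : ∀ c : ℤ, Summable (fun j : ℕ => ρ ^ j * δ (c + (j : ℤ))) := by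
    intro c
    apply Summable.of_norm
    apply Summable.of_nonneg_of_le (fun j => norm_nonneg _) (fun j => ?_)
      ((summable_geometric_of_lt_one hρ0.le hρ1).mul_left δmax)
    have : ‖ρ ^ j * δ (c + (j : ℤ))‖ = ρ ^ j * |δ (c + (j : ℤ))| := by
      rw [norm_mul, Real.norm_eq_abs, Real.norm_eq_abs, abs_of_nonneg (pow_nonneg hρ0.le j)]
    rw [this, mul_comm δmax (ρ ^ j)]
    exact mul_le_mul_of_nonneg_left (hbound _) (pow_nonneg hρ0.le j)
  -- express the second difference as one tsum
  have e2 : ∀ j : ℕ, t - 1 + 1 + (j : ℤ) = t + (j : ℤ) := fun j => by ring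
  have e3 : ∀ j : ℕ, t - 2 + 1 + (j : ℤ) = t - 1 + (j : ℤ) := fun j => by ring
  have h1 := hsumm (t + 1)
  have h2 := hsumm t
  have h3 := hsumm (t - 1)
  have key : T t - 2 * T (t - 1) + T (t - 2) =
      ∑' j : ℕ, ρ ^ j * (δ (t + 1 + (j : ℤ)) - 2 * δ (t + (j : ℤ)) + δ (t - 1 + (j : ℤ))) := by
    rw [hT t, hT (t - 1), hT (t - 2)]
    simp only [e2, e3]
    rw [show (2 : ℝ) * ∑' j : ℕ, ρ ^ j * δ (t + (j : ℤ))
        = ∑' j : ℕ, 2 * (ρ ^ j * δ (t + (j : ℤ))) from (tsum_mul_left).symm]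
    rw [← Summable.tsum_sub h1 (h2.mul_left 2), ← Summable.tsum_add (h1.sub (h2.mul_left 2)) h3]
    exact tsum_congr fun j => by ring
  set D : ℝ := (T₂ : ℝ) - (T₁ : ℝ) - (τ : ℝ) with hD
  set a : ℕ := (T₁ + (τ : ℤ) - t).toNat with ha
  set b : ℕ := (T₂ - t).toNat with hb
  set d : ℕ := (T₂ - T₁ - (τ : ℤ)).toNat with hd
  have haz : (a : ℤ) = T₁ + (τ : ℤ) - t := Int.toNat_of_nonneg (by omega)
  have hbz : (b : ℤ) = T₂ - t := Int.toNat_of_nonneg (by omega)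
  have hdz : (d : ℤ) = T₂ - T₁ - (τ : ℤ) := Int.toNat_of_nonneg (by omega)
  have hab : a ≠ b := by
    intro h
    rw [h] at haz
    omega
  have hFa : ρ ^ a * (δ (t + 1 + (a : ℤ)) - 2 * δ (t + (a : ℤ)) + δ (t - 1 + (a : ℤ)))
      = ρ ^ a * (δmax * (-(1 / (τ : ℝ)) - 1 / D)) := by
    have e1 : t + 1 + (a : ℤ) = T₁ + (τ : ℤ) + 1 := by omega
    have e2' : t + (a : ℤ) = T₁ + (τ : ℤ) := by omega
    have e3' : t - 1 + (a : ℤ) = T₁ + (τ : ℤ) - 1 := by omega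
    rw [e1, e2', e3', hka]
  have hFb : ρ ^ b * (δ (t + 1 + (b : ℤ)) - 2 * δ (t + (b : ℤ)) + δ (t - 1 + (b : ℤ)))
      = ρ ^ b * (δmax * (1 / D)) := by
    have e1 : t + 1 + (b : ℤ) = T₂ + 1 := by omega
    have e2' : t + (b : ℤ) = T₂ := by omega
    have e3' : t - 1 + (b : ℤ) = T₂ - 1 := by omega
    rw [e1, e2', e3', hkb]
  have hsum2 : (∑' j : ℕ, ρ ^ j * (δ (t + 1 + (j : ℤ)) - 2 * δ (t + (j : ℤ)) + δ (t - 1 + (j : ℤ))))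
      = ρ ^ a * (δmax * (-(1 / (τ : ℝ)) - 1 / D)) + ρ ^ b * (δmax * (1 / D)) := by
    rw [tsum_eq_sum (s := ({a, b} : Finset ℕ)) ?_]
    · rw [Finset.sum_pair hab, hFa, hFb]
    · intro j hj
      simp only [Finset.mem_insert, Finset.mem_singleton, not_or] at hj
      have h0 := hker (t + (j : ℤ)) (by omega) (by omega) (by omega)
      have e1 : t + 1 + (j : ℤ) = t + (j : ℤ) + 1 := by ring
      have e3' : t - 1 + (j : ℤ) = t + (j : ℤ) - 1 := by ring
      rw [e1, e3', h0, mul_zero]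
  have hbad : b = a + d := by omega
  have hmain : T t - 2 * T (t - 1) + T (t - 2) =
      δmax * ρ ^ a * (-(1 / (τ : ℝ)) + (ρ ^ d - 1) / D) := by
    rw [key, hsum2, hbad, pow_add]
    field_simp
    ring
  refine ⟨hmain, ?_⟩
  rw [hmain]
  have hd1 : 1 ≤ d := by omega
  have hρd : ρ ^ d < 1 := pow_lt_one₀ hρ0.le hρ1 (by omega)
  have hneg : -(1 / (τ : ℝ)) + (ρ ^ d - 1) / D < 0 := by
    have h1' : 0 < 1 / (τ : ℝ) := by positivity
    have h2' : (ρ ^ d - 1) / D < 0 := div_neg_of_neg_of_pos (by linarith) hDR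
    linarith
  have hpos : 0 < δmax * ρ ^ a := mul_pos hδmax (pow_pos hρ0 a)
  exact mul_neg_of_pos_of_neg hpos hneg
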